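/- arXiv:2111.07651 — 6 statements merged into one kernel-verified Lean document; each statement's English description precedes it below -/
import Mathlib

section
/- Let N be a finite-dimensional nilpotent Lie algebra over a field of characteristic zero, and let d be a derivation of N with Jordan decomposition d = d₀ + d₁ where d₀ is semisimple and d₁ is nilpotent with [d₀, d₁] = 0. Then d₀ is also a derivation of N. -/
open Module.End TensorProduct Polynomial

section Aux

variable {K N : Type*} [Field K] [LieRing N] [LieAlgebra K N]

private lemma aux_pow_lie (D : Module.End K N)
    (hder : ∀ x y : N, D ⁅x, y⁆ = ⁅D x, y⁆ + ⁅x, D y⁆) (μ ν : K) :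
    ∀ (n k l : ℕ), k + l ≤ n + 1 → ∀ (y z : N),
      ((D - μ • 1) ^ k) y = 0 → ((D - ν • 1) ^ l) z = 0 →
      ((D - (μ + ν) • 1) ^ n) ⁅y, z⁆ = 0 := by
  intro n
  induction n with
  | zero =>
    intro k l hkl y z hy hz
    rcases Nat.le_one_iff_eq_zero_or_eq_one.mp hkl with h | h
    · obtain ⟨hk, hl⟩ := Nat.add_eq_zero.mp h
      subst hk; subst hl
      simp only [pow_zero, Module.End.one_apply] at hy hz ⊢
      simp [hy]
    · rcases Nat.add_eq_one_iff.mp h with ⟨hk, hl⟩ | ⟨hk, hl⟩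
      · subst hk
        simp only [pow_zero, Module.End.one_apply] at hy
        simp [hy]
      · subst hl
        simp only [pow_zero, Module.End.one_apply] at hz
        simp [hz]
  | succ n ih =>
    intro k l hkl y z hy hz
    rcases Nat.eq_zero_or_eq_succ_pred k with hk | hk
    · subst hk
      simp only [pow_zero, Module.End.one_apply] at hy
      simp [hy]
    rcases Nat.eq_zero_or_eq_succ_pred l with hl | hl
    · subst hl
      simp only [pow_zero, Module.End.one_apply] at hz
      simp [hz]
    set k' := k - 1
    set l' := l - 1
    have key : (D - (μ + ν) • 1) ⁅y, z⁆ = ⁅(D - μ • 1) y, z⁆ + ⁅y, (D - ν • 1) z⁆ := by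
      simp only [LinearMap.sub_apply, LinearMap.smul_apply, Module.End.one_apply, hder,
        sub_lie, lie_sub, smul_lie, lie_smul, add_smul, LinearMap.add_apply]
      abel
    have hy' : ((D - μ • 1) ^ k') ((D - μ • 1) y) = 0 := by
      rw [← Module.End.mul_apply, ← pow_succ]
      rw [hk] at hy; exact hy
    have hz' : ((D - ν • 1) ^ l') ((D - ν • 1) z) = 0 := by
      rw [← Module.End.mul_apply, ← pow_succ]
      rw [hl] at hz; exact hz
    have h1 : ((D - (μ + ν) • 1) ^ n) ⁅(D - μ • 1) y, z⁆ = 0 :=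
      ih k' l (by omega) _ _ hy' hz
    have h2 : ((D - (μ + ν) • 1) ^ n) ⁅y, (D - ν • 1) z⁆ = 0 :=
      ih k l' (by omega) _ _ hy hz'
    rw [pow_succ, Module.End.mul_apply, key, map_add, h1, h2, add_zero]

private lemma lie_mem_maxGenEigenspace_of_der (D : Module.End K N)
    (hder : ∀ x y : N, D ⁅x, y⁆ = ⁅D x, y⁆ + ⁅x, D y⁆) {μ ν : K} {y z : N}
    (hy : y ∈ D.maxGenEigenspace μ) (hz : z ∈ D.maxGenEigenspace ν) :
    ⁅y, z⁆ ∈ D.maxGenEigenspace (μ + ν) := by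
  rw [Module.End.mem_maxGenEigenspace] at hy hz ⊢
  obtain ⟨k, hk⟩ := hy
  obtain ⟨l, hl⟩ := hz
  exact ⟨k + l, aux_pow_lie D hder μ ν (k + l) k l (by omega) y z hk hl⟩

/-- The algebraically closed case. -/
private lemma core {K N : Type*} [Field K] [IsAlgClosed K] [LieRing N] [LieAlgebra K N]
    [FiniteDimensional K N] (D D₀ D₁ : Module.End K N)
    (hder : ∀ x y : N, D ⁅x, y⁆ = ⁅D x, y⁆ + ⁅x, D y⁆)
    (hd : D = D₀ + D₁) (hss : D₀.IsSemisimple) (hnil : IsNilpotent D₁)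
    (hcomm : Commute D₀ D₁) :
    ∀ x y : N, D₀ ⁅x, y⁆ = ⁅D₀ x, y⁆ + ⁅x, D₀ y⁆ := by
  have hcommD : Commute D D₀ := by
    rw [hd]; exact (Commute.refl D₀).add_left hcomm.symm
  have hnil' : IsNilpotent (D - D₀) := by
    rw [hd]; simpa using hnil
  have aux : ∀ (μ : K) (w : N), w ∈ D.maxGenEigenspace μ → D₀ w = μ • w := fun μ w hw ↦
    Module.End.apply_eq_of_mem_of_comm_of_isFinitelySemisimple_of_isNil hw hcommD
      hss.isFinitelySemisimple hnil'
  have htop : ⨆ μ : K, D.maxGenEigenspace μ = ⊤ := Module.End.iSup_maxGenEigenspace_eq_top D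
  intro x y
  have hx : x ∈ ⨆ μ : K, D.maxGenEigenspace μ := htop ▸ Submodule.mem_top
  have hy : y ∈ ⨆ μ : K, D.maxGenEigenspace μ := htop ▸ Submodule.mem_top
  induction hx using Submodule.iSup_induction' with
  | mem μ x hxμ =>
    induction hy using Submodule.iSup_induction' with
    | mem ν y hyν =>
      have hxyz : ⁅x, y⁆ ∈ D.maxGenEigenspace (μ + ν) :=
        lie_mem_maxGenEigenspace_of_der D hder hxμ hyν
      rw [aux _ _ hxyz, aux _ _ hxμ, aux _ _ hyν, smul_lie, lie_smul, ← add_smul]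
    | zero => simp
    | add _ _ _ _ h h' => simp only [lie_add, map_add, h, h']; abel
  | zero => simp
  | add _ _ _ _ h h' => simp only [add_lie, map_add, h, h']; abel

end Aux

/-- If a derivation `d` of a finite-dimensional nilpotent Lie algebra `N` over a field of
characteristic zero decomposes as `d = d₀ + d₁` with `d₀` a semisimple endomorphism,
`d₁` a nilpotent endomorphism and `[d₀, d₁] = 0`, then `d₀` is again a derivation of `N`. -/
theorem semisimple_part_of_derivation_is_derivation
    (K : Type*) [Field K] [CharZero K]
    (N : Type*) [LieRing N] [LieAlgebra K N] [FiniteDimensional K N]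
    [LieRing.IsNilpotent N]
    (d : LieDerivation K N N) (d₀ d₁ : Module.End K N)
    (hd : (d : N →ₗ[K] N) = d₀ + d₁)
    (hss : d₀.IsSemisimple) (hnil : IsNilpotent d₁)
    (hcomm : Commute d₀ d₁) :
    ∀ x y : N, d₀ ⁅x, y⁆ = ⁅d₀ x, y⁆ + ⁅x, d₀ y⁆ := by
  intro x y
  set A := AlgebraicClosure K
  -- Base change everything to the algebraic closure.
  set D : Module.End A (A ⊗[K] N) := (d : N →ₗ[K] N).baseChange A with hD
  set D₀ : Module.End A (A ⊗[K] N) := d₀.baseChange A with hD₀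
  set D₁ : Module.End A (A ⊗[K] N) := d₁.baseChange A with hD₁
  have hDsum : D = D₀ + D₁ := by
    rw [hD, hD₀, hD₁, hd]; ext v; simp [LinearMap.baseChange_tmul]
  -- D is a derivation of A ⊗ N.
  have hder : ∀ X Y : A ⊗[K] N, D ⁅X, Y⁆ = ⁅D X, Y⁆ + ⁅X, D Y⁆ := by
    intro X Y
    induction X using TensorProduct.induction_on with
    | zero => simp
    | add X₁ X₂ h₁ h₂ => simp only [add_lie, map_add, h₁, h₂]; abel
    | tmul a x =>
      induction Y using TensorProduct.induction_on with
      | zero => simp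
      | add Y₁ Y₂ h₁ h₂ => simp only [lie_add, map_add, h₁, h₂]; abel
      | tmul b y =>
        simp only [LieAlgebra.ExtendScalars.bracket_tmul, hD, LinearMap.baseChange_tmul,
          LieDerivation.coeFn_coe, LieDerivation.apply_lie_eq_add, tmul_add]
        abel
  -- D₀ is semisimple.
  have hssD₀ : D₀.IsSemisimple := by
    have hsf : Squarefree (minpoly K d₀) := hss.minpoly_squarefree
    have hsep : ((minpoly K d₀).map (algebraMap K A)).Separable :=
      ((PerfectField.separable_iff_squarefree).mpr hsf).map
    refine Module.End.isSemisimple_of_squarefree_aeval_eq_zero hsep.squarefree ?_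
    have hb : (Module.End.baseChangeHom K A N) d₀ = D₀ := rfl
    rw [aeval_map_algebraMap, ← hb, aeval_algHom_apply, minpoly.aeval, map_zero]
  -- D₁ is nilpotent.
  have hnilD₁ : IsNilpotent D₁ := by
    obtain ⟨n, hn⟩ := hnil
    exact ⟨n, by rw [hD₁, ← LinearMap.baseChange_pow, hn, LinearMap.baseChange_zero]⟩
  -- D₀ and D₁ commute.
  have hcommD : Commute D₀ D₁ := by
    have h1 : D₀ * D₁ = (d₀ * d₁).baseChange A := (LinearMap.baseChange_mul d₀ d₁).symm
    have h2 : D₁ * D₀ = (d₁ * d₀).baseChange A := (LinearMap.baseChange_mul d₁ d₀).symm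
    unfold Commute SemiconjBy
    rw [h1, h2, hcomm.eq]
  -- Apply the algebraically closed case.
  have key := core D D₀ D₁ hder hDsum hssD₀ hnilD₁ hcommD (1 ⊗ₜ[K] x) (1 ⊗ₜ[K] y)
  -- Simplify to equations between simple tensors.
  have h1 : (1 : A) ⊗ₜ[K] (d₀ ⁅x, y⁆) = 1 ⊗ₜ[K] (⁅d₀ x, y⁆ + ⁅x, d₀ y⁆) := by
    have e1 : ⁅(1 : A) ⊗ₜ[K] x, (1 : A) ⊗ₜ[K] y⁆ = (1 : A) ⊗ₜ[K] ⁅x, y⁆ := by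
      rw [LieAlgebra.ExtendScalars.bracket_tmul, one_mul]
    rw [e1, hD₀, LinearMap.baseChange_tmul, LinearMap.baseChange_tmul,
      LinearMap.baseChange_tmul, LieAlgebra.ExtendScalars.bracket_tmul,
      LieAlgebra.ExtendScalars.bracket_tmul, one_mul, ← tmul_add] at key
    exact key
  -- Descend along the injection `x ↦ 1 ⊗ x`.
  have h0 : LinearMap.ker (LinearMap.toSpanSingleton K A 1) = ⊥ := by
    rw [LinearMap.ker_eq_bot]
    intro a b hab
    have h : algebraMap K A a = algebraMap K A b := by
      simpa [LinearMap.toSpanSingleton, Algebra.algebraMap_eq_smul_one] using hab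
    exact (algebraMap K A).injective h
  obtain ⟨φ, hφ⟩ := (LinearMap.toSpanSingleton K A 1).exists_leftInverse_of_injective h0
  have hφ1 : φ 1 = 1 := by
    have := LinearMap.congr_fun hφ 1
    simpa [LinearMap.toSpanSingleton] using this
  have h2 := congrArg ((TensorProduct.lid K N).toLinearMap.comp (φ.rTensor N)) h1
  simpa [LinearMap.rTensor_tmul, TensorProduct.lid_tmul, hφ1] using h2
end

section
/- Let L be a solvable Lie algebra over ℂ containing linearly independent elements u, y₁,…,y_η, f₁,…,f_τ satisfying: [u, yⱼ] = Σₜ β_{j,t} fₜ for all j; [fₜ, yⱼ] = μ_{t,j} fₜ for all t, j; and [u, [yᵢ, yⱼ]] = 0 for all i, j. Assume that for each t there exists i with μ_{t,i} ≠ 0, and for each t there exist i ≠ j with μ_{t,i} ≠ μ_{t,j}. Then after replacing u by u' = u − Σ_{t : μ_{t,1}≠0} (β_{1,t}/μ_{t,1}) fₜ (and iterating analogous changes), the element u can be chosen so that [u, yⱼ] = 0 for all 1 ≤ j ≤ η. Precisely: there exists an element u'' of the form u + (linear combination of f₁,…,f_τ) such that [u'', yⱼ] = 0 for all j. -/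
/-- Lemma 5 of the paper: given linearly independent elements `u, y₁, …, y_η, f₁, …, f_τ`
of a complex solvable Lie algebra with `⁅u, yⱼ⁆ = Σₜ β j t • fₜ`, `⁅fₜ, yⱼ⁆ = μ t j • fₜ`,
`⁅u, ⁅yᵢ, yⱼ⁆⁆ = 0`, and such that every row `μ t ·` is nonzero and non-constant, the element
`u` can be corrected by a linear combination of the `fₜ` so that it commutes with all `yⱼ`. -/
theorem correction_of_u_commutes
    (L : Type*) [LieRing L] [LieAlgebra ℂ L] [FiniteDimensional ℂ L]
    [LieAlgebra.IsSolvable L]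
    (η τ : ℕ) (u : L) (y : Fin η → L) (f : Fin τ → L)
    (hli : LinearIndependent ℂ (Sum.elim (fun _ : Unit => u) (Sum.elim y f)))
    (β : Fin η → Fin τ → ℂ) (μ : Fin τ → Fin η → ℂ)
    (huy : ∀ j, ⁅u, y j⁆ = ∑ t, β j t • f t)
    (hfy : ∀ t j, ⁅f t, y j⁆ = μ t j • f t)
    (huyy : ∀ i j, ⁅u, ⁅y i, y j⁆⁆ = 0)
    (hμ1 : ∀ t, ∃ i, μ t i ≠ 0)
    (hμ2 : ∀ t, ∃ i j, i ≠ j ∧ μ t i ≠ μ t j) :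
    ∃ c : Fin τ → ℂ, ∀ j, ⁅u + ∑ t, c t • f t, y j⁆ = 0 := by
  -- bracket commutes with finite sums
  have sum_lie' : ∀ (g : Fin τ → L) (z : L),
      ⁅∑ s, g s, z⁆ = ∑ s, ⁅g s, z⁆ := fun g z =>
    map_sum (AddMonoidHom.mk' (fun x => ⁅x, z⁆) fun a b => add_lie a b z) g Finset.univ
  have lie_sum' : ∀ (z : L) (g : Fin τ → L),
      ⁅z, ∑ s, g s⁆ = ∑ s, ⁅z, g s⁆ := fun z g =>
    map_sum (AddMonoidHom.mk' (fun x => ⁅z, x⁆) fun a b => lie_add z a b) g Finset.univ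
  -- linear independence of the `f t`
  have hf : LinearIndependent ℂ f := by
    have := hli.comp (Sum.inr ∘ Sum.inr)
      (Sum.inr_injective.comp Sum.inr_injective)
    exact this
  rw [linearIndependent_iff'] at hf
  -- the key symmetry relation
  have key : ∀ i j t, β i t * μ t j = β j t * μ t i := by
    intro i j t
    have h0 : ∑ s, (β i s * μ s j - β j s * μ s i) • f s = 0 := by
      have hj := huyy i j
      rw [leibniz_lie] at hj
      have h1 : ⁅⁅u, y i⁆, y j⁆ = ∑ s, (β i s * μ s j) • f s := by
        rw [huy i, sum_lie']
        refine Finset.sum_congr rfl fun s _ => ?_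
        rw [smul_lie, hfy, smul_smul, mul_comm]
      have h2 : ⁅y i, ⁅u, y j⁆⁆ = -∑ s, (β j s * μ s i) • f s := by
        rw [huy j, lie_sum', ← Finset.sum_neg_distrib]
        refine Finset.sum_congr rfl fun s _ => ?_
        rw [lie_smul, ← lie_skew, hfy, smul_neg, smul_smul, mul_comm]
      rw [h1, h2] at hj
      calc ∑ s, (β i s * μ s j - β j s * μ s i) • f s
          = ∑ s, (β i s * μ s j) • f s + -∑ s, (β j s * μ s i) • f s := by
            simp [sub_eq_add_neg, add_smul, neg_smul, Finset.sum_add_distrib]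
        _ = 0 := hj
    exact sub_eq_zero.mp
      (hf Finset.univ (fun s => β i s * μ s j - β j s * μ s i) h0 t (Finset.mem_univ t))
  -- choose the correction coefficients
  choose i₀ hi₀ using hμ1
  refine ⟨fun t => -β (i₀ t) t / μ t (i₀ t), fun j => ?_⟩
  rw [add_lie, huy j, sum_lie', ← Finset.sum_add_distrib]
  refine Finset.sum_eq_zero fun t _ => ?_
  rw [smul_lie, hfy, smul_smul, ← add_smul]
  have hk := key (i₀ t) j t
  have hc : -β (i₀ t) t / μ t (i₀ t) * μ t j = -β j t := by
    rw [div_mul_eq_mul_div, neg_mul, hk, neg_div, mul_div_assoc, div_self (hi₀ t), mul_one]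
  rw [hc]
  simp
end

section
/- The 5-dimensional complex Lie algebra with basis e₁,e₂,e₃,x₁,x₂ and nonzero brackets [e₂,e₃] = e₁, [e₂,x₁] = e₂, [e₁,x₁] = e₁, [e₃,x₂] = e₃, [e₁,x₂] = e₁ is a well-defined Lie algebra (the bracket is alternating and satisfies the Jacobi identity), it is solvable, and its center is zero. -/
namespace FiveDimExt

abbrev R : Type := Fin 5 → ℂ

noncomputable def br (u v : R) : R :=
  ![u 1 * v 2 - u 2 * v 1 + u 0 * v 3 - u 3 * v 0 + u 0 * v 4 - u 4 * v 0,
    u 1 * v 3 - u 3 * v 1,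
    u 2 * v 4 - u 4 * v 2, 0, 0]

noncomputable instance : LieRing R where
  bracket := br
  add_lie x y z := by funext i; fin_cases i <;> simp [br] <;> ring
  lie_add x y z := by funext i; fin_cases i <;> simp [br] <;> ring
  lie_self x := by funext i; fin_cases i <;> simp [br] <;> ring
  leibniz_lie x y z := by funext i; fin_cases i <;> simp [br] <;> ring

noncomputable instance : LieAlgebra ℂ R where
  lie_smul c x y := by funext i; fin_cases i <;> simp [Bracket.bracket, br] <;> ring

lemma br_def (u v : R) : ⁅u, v⁆ = br u v := rfl

lemma br_three (u v : R) : ⁅u, v⁆ 3 = 0 := rfl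
lemma br_four (u v : R) : ⁅u, v⁆ 4 = 0 := rfl

noncomputable def N1 : LieIdeal ℂ R where
  carrier := {w | w 3 = 0 ∧ w 4 = 0}
  add_mem' := by rintro a b ⟨h1, h2⟩ ⟨h3, h4⟩; constructor <;> simp_all [Pi.add_apply]
  zero_mem' := ⟨rfl, rfl⟩
  smul_mem' := by rintro c a ⟨h1, h2⟩; constructor <;> simp_all [Pi.smul_apply]
  lie_mem := by intro x m _; exact ⟨br_three x m, br_four x m⟩

noncomputable def N0 : LieIdeal ℂ R where
  carrier := {w | w 1 = 0 ∧ w 2 = 0 ∧ w 3 = 0 ∧ w 4 = 0}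
  add_mem' := by
    rintro a b ⟨h1, h2, h3, h4⟩ ⟨h5, h6, h7, h8⟩
    refine ⟨?_, ?_, ?_, ?_⟩ <;> simp_all [Pi.add_apply]
  zero_mem' := ⟨rfl, rfl, rfl, rfl⟩
  smul_mem' := by
    rintro c a ⟨h1, h2, h3, h4⟩
    refine ⟨?_, ?_, ?_, ?_⟩ <;> simp_all [Pi.smul_apply]
  lie_mem := by
    intro x m ⟨h1, h2, h3, h4⟩
    refine ⟨?_, ?_, br_three x m, br_four x m⟩ <;>
      show br x m _ = 0 <;> simp [br, h1, h2, h3, h4]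

lemma solvable : LieAlgebra.IsSolvable R := by
  rw [LieAlgebra.isSolvable_iff ℂ]
  refine ⟨3, ?_⟩
  have h1 : LieAlgebra.derivedSeries ℂ R 1 ≤ N1 := by
    rw [LieAlgebra.derivedSeries_def, LieAlgebra.derivedSeriesOfIdeal_succ,
      LieAlgebra.derivedSeriesOfIdeal_zero]
    rw [LieSubmodule.lie_le_iff]
    intro x _ m _
    exact ⟨br_three x m, br_four x m⟩
  have h2 : LieAlgebra.derivedSeries ℂ R 2 ≤ N0 := by
    have : LieAlgebra.derivedSeries ℂ R 2 ≤ ⁅N1, N1⁆ := by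
      rw [LieAlgebra.derivedSeries_def, LieAlgebra.derivedSeriesOfIdeal_succ,
        ← LieAlgebra.derivedSeries_def]
      exact LieSubmodule.mono_lie h1 h1
    refine this.trans ?_
    rw [LieSubmodule.lie_le_iff]
    rintro x ⟨hx3, hx4⟩ m ⟨hm3, hm4⟩
    refine ⟨?_, ?_, br_three x m, br_four x m⟩ <;>
      show br x m _ = 0 <;> simp [br, hx3, hx4, hm3, hm4]
  have h3 : LieAlgebra.derivedSeries ℂ R 3 ≤ ⊥ := by
    have : LieAlgebra.derivedSeries ℂ R 3 ≤ ⁅N0, N0⁆ := by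
      rw [LieAlgebra.derivedSeries_def, LieAlgebra.derivedSeriesOfIdeal_succ,
        ← LieAlgebra.derivedSeries_def]
      exact LieSubmodule.mono_lie h2 h2
    refine this.trans ?_
    rw [LieSubmodule.lie_le_iff]
    rintro x ⟨hx1, hx2, hx3, hx4⟩ m ⟨hm1, hm2, hm3, hm4⟩
    rw [LieSubmodule.mem_bot]
    funext i; fin_cases i <;>
      first
        | exact br_three x m
        | exact br_four x m
        | (show br x m _ = 0; simp [br, hx1, hx2, hx3, hx4, hm1, hm2, hm3, hm4])
  exact le_bot_iff.mp h3

noncomputable def b : Module.Basis (Fin 5) ℂ R := Pi.basisFun ℂ (Fin 5)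

lemma center_zero : LieAlgebra.center ℂ R = ⊥ := by
  rw [eq_bot_iff]
  intro z hz
  rw [LieModule.mem_maxTrivSubmodule] at hz
  rw [LieSubmodule.mem_bot]
  have h3 := hz (Pi.single 3 1)
  have h4 := hz (Pi.single 4 1)
  have h1 := hz (Pi.single 1 1)
  have h2 := hz (Pi.single 2 1)
  have e3_1 : ⁅(Pi.single 3 1 : R), z⁆ 1 = -z 1 := by
    show br _ z 1 = _; simp [br, Pi.single_apply]
  have e3_0 : ⁅(Pi.single 3 1 : R), z⁆ 0 = -z 0 := by
    show br _ z 0 = _; simp [br, Pi.single_apply]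
  have e4_2 : ⁅(Pi.single 4 1 : R), z⁆ 2 = -z 2 := by
    show br _ z 2 = _; simp [br, Pi.single_apply]
  have e1_1 : ⁅(Pi.single 1 1 : R), z⁆ 1 = z 3 := by
    show br _ z 1 = _; simp [br, Pi.single_apply]
  have e2_2 : ⁅(Pi.single 2 1 : R), z⁆ 2 = z 4 := by
    show br _ z 2 = _; simp [br, Pi.single_apply]
  rw [h3] at e3_1 e3_0
  rw [h4] at e4_2
  rw [h1] at e1_1
  rw [h2] at e2_2
  simp only [Pi.zero_apply] at e3_1 e3_0 e4_2 e1_1 e2_2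
  funext i
  fin_cases i <;> simp_all <;> linarith [e3_0, e3_1, e4_2]

lemma basis_bracket (i j : Fin 5) :
    ⁅b i, b j⁆ = br (Pi.single i 1) (Pi.single j 1) := by
  simp [b, Pi.basisFun_apply, br_def]

end FiveDimExt

/-- There is a (well-defined) 5-dimensional complex Lie algebra with basis
`e₁,e₂,e₃,x₁,x₂` whose only nonzero brackets of basis vectors are
`⁅e₂,e₃⁆ = e₁`, `⁅e₂,x₁⁆ = e₂`, `⁅e₁,x₁⁆ = e₁`, `⁅e₃,x₂⁆ = e₃`, `⁅e₁,x₂⁆ = e₁`;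
it is solvable and its center is zero. (The Lie algebra structure — in particular the Jacobi
identity — is part of the existence assertion.) -/
theorem five_dim_extension_exists_solvable_center_zero :
    ∃ (R : Type) (_ : LieRing R) (_ : LieAlgebra ℂ R) (b : Module.Basis (Fin 5) ℂ R),
      Module.finrank ℂ R = 5 ∧
      ⁅b 1, b 2⁆ = b 0 ∧ ⁅b 1, b 3⁆ = b 1 ∧ ⁅b 0, b 3⁆ = b 0 ∧
      ⁅b 2, b 4⁆ = b 2 ∧ ⁅b 0, b 4⁆ = b 0 ∧
      ⁅b 0, b 1⁆ = 0 ∧ ⁅b 0, b 2⁆ = 0 ∧ ⁅b 1, b 4⁆ = 0 ∧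
      ⁅b 2, b 3⁆ = 0 ∧ ⁅b 3, b 4⁆ = 0 ∧
      LieAlgebra.IsSolvable R ∧ LieAlgebra.center ℂ R = ⊥ := by
  refine ⟨FiveDimExt.R, inferInstance, inferInstance, FiveDimExt.b, ?_, ?_, ?_, ?_, ?_, ?_,
    ?_, ?_, ?_, ?_, ?_, FiveDimExt.solvable, FiveDimExt.center_zero⟩
  · simp [FiveDimExt.R]
  all_goals
    rw [FiveDimExt.basis_bracket] <;> try rfl
  all_goals
    funext k; fin_cases k <;> simp [FiveDimExt.br, FiveDimExt.b, Pi.single_apply]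
end

section
/- Let L be a finite-dimensional Lie algebra over a field of characteristic 0 such that every derivation of L is inner. If the center of L is nontrivial, then L is not solvable. -/
/-- If every derivation of a finite-dimensional Lie algebra `L` over a field of characteristic
zero is inner and the center of `L` is nontrivial, then `L` is not solvable. -/
theorem not_solvable_of_all_derivations_inner_of_center_ne_bot
    (K : Type*) [Field K] [CharZero K]
    (L : Type*) [LieRing L] [LieAlgebra K L] [FiniteDimensional K L]
    (hinner : ∀ D : LieDerivation K L L, ∃ x : L, D = LieDerivation.ad K L x)
    (hcenter : LieAlgebra.center K L ≠ ⊥) :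
    ¬ LieAlgebra.IsSolvable L := by
  intro hsolv
  -- pick a nonzero central element
  obtain ⟨z, hzmem, hz⟩ : ∃ z ∈ LieAlgebra.center K L, z ≠ 0 := by
    by_contra h
    push_neg at h
    exact hcenter ((LieSubmodule.eq_bot_iff _).mpr h)
  have hzc : ∀ y : L, ⁅z, y⁆ = 0 := by
    intro y
    have := (LieModule.mem_maxTrivSubmodule K L L z).mp hzmem y
    rw [← lie_skew, this, neg_zero]
  have : Nontrivial L := ⟨z, 0, hz⟩
  -- the derived ideal is proper
  have hlt : LieAlgebra.derivedSeries K L 1 < ⊤ :=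
    by haveI := hsolv; exact LieAlgebra.derivedSeries_lt_top_of_solvable K L
  set S : LieIdeal K L := LieAlgebra.derivedSeries K L 1 with hS
  obtain ⟨y₁, hy₁⟩ : ∃ y₁ : L, y₁ ∉ S := by
    by_contra h
    push_neg at h
    exact hlt.ne (le_antisymm le_top (fun x _ => h x))
  -- a functional vanishing on [L,L] with f y₁ = 1
  have hy₁' : S.toSubmodule.mkQ y₁ ≠ 0 := by
    simpa [Submodule.Quotient.mk_eq_zero] using hy₁
  obtain ⟨φ, hφ⟩ : ∃ φ : Module.Dual K (L ⧸ S.toSubmodule),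
      φ (S.toSubmodule.mkQ y₁) ≠ 0 := by
    by_contra h
    push_neg at h
    exact hy₁' ((Module.forall_dual_apply_eq_zero_iff K _).mp h)
  set f : L →ₗ[K] K :=
    (φ (S.toSubmodule.mkQ y₁))⁻¹ • (φ ∘ₗ S.toSubmodule.mkQ) with hfdef
  have hf1 : f y₁ = 1 := by
    simp only [hfdef, LinearMap.smul_apply, LinearMap.coe_comp, Function.comp_apply,
      smul_eq_mul]
    exact inv_mul_cancel₀ hφ
  have hfbr : ∀ a b : L, f ⁅a, b⁆ = 0 := by
    intro a b
    have hmem : ⁅a, b⁆ ∈ S := by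
      rw [hS, LieAlgebra.derivedSeries_def, LieAlgebra.derivedSeriesOfIdeal_succ,
        LieAlgebra.derivedSeriesOfIdeal_zero]
      exact LieSubmodule.lie_mem_lie (LieSubmodule.mem_top a) (LieSubmodule.mem_top b)
    have hq : (S.toSubmodule).mkQ ⁅a, b⁆ = 0 := by
      rw [Submodule.mkQ_apply, Submodule.Quotient.mk_eq_zero]; exact hmem
    simp only [hfdef, LinearMap.smul_apply, LinearMap.coe_comp, Function.comp_apply,
      smul_eq_mul]
    rw [hq, map_zero, mul_zero]
  -- the compatibility predicate making `y ↦ f y • v` a derivation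
  set P : L → Prop := fun v => ∀ a b : L, f a • ⁅v, b⁆ + f b • ⁅a, v⁆ = 0 with hPdef
  have key : ∀ v : L, ∃ w : L, P v → ((∀ y, ⁅w, y⁆ = f y • v) ∧ P w) := by
    intro v
    by_cases hv : P v
    · have hD : ∀ a b : L, (LinearMap.smulRight f v) ⁅a, b⁆ =
          ⁅a, (LinearMap.smulRight f v) b⁆ - ⁅b, (LinearMap.smulRight f v) a⁆ := by
        intro a b
        have h := hv a b
        simp only [LinearMap.smulRight_apply, hfbr, zero_smul, lie_smul]
        have : f b • ⁅a, v⁆ = f a • ⁅b, v⁆ := by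
          have h2 : f b • ⁅a, v⁆ = -(f a • ⁅v, b⁆) := eq_neg_of_add_eq_zero_right h
          rw [h2, ← lie_skew v b, smul_neg, neg_neg]
        rw [this]
        abel
      set D : LieDerivation K L L := ⟨LinearMap.smulRight f v, hD⟩ with hDdef
      obtain ⟨x, hx⟩ := hinner D
      have hxy : ∀ y : L, ⁅x, y⁆ = f y • v := by
        intro y
        have := congrArg (fun E : LieDerivation K L L => E y) hx
        simp only [hDdef] at this
        rw [LieDerivation.ad_apply_apply] at this
        simpa using this.symm
      refine ⟨x, fun _ => ⟨hxy, ?_⟩⟩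
      intro a b
      have hax : ⁅a, x⁆ = -(f a • v) := by rw [← lie_skew, hxy a]
      rw [hxy b, hax, smul_comm (f a) (f b) v, smul_neg]
      abel
    · exact ⟨0, fun h => absurd h hv⟩
  choose F hF using key
  -- the ladder sequence
  set x : ℕ → L := fun n => F^[n] z with hxdef
  have hP : ∀ n, P (x n) := by
    intro n
    induction n with
    | zero =>
      intro a b
      simp only [hxdef, Function.iterate_zero, id_eq, hzc b]
      rw [← lie_skew, hzc a, neg_zero, smul_zero, smul_zero, add_zero]
    | succ n ih =>
      have : x (n + 1) = F (x n) := by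
        simp only [hxdef, Function.iterate_succ_apply']
      rw [this]
      exact (hF (x n) ih).2
  have hrel : ∀ n, ∀ y : L, ⁅x (n + 1), y⁆ = f y • x n := by
    intro n
    have : x (n + 1) = F (x n) := by
      simp only [hxdef, Function.iterate_succ_apply']
    rw [this]
    exact (hF (x n) (hP n)).1
  -- the lowering linear map
  set g : L →ₗ[K] L :=
    { toFun := fun v => ⁅v, y₁⁆
      map_add' := fun a b => add_lie a b y₁
      map_smul' := fun c a => smul_lie c a y₁ } with hgdef
  have hg0 : g (x 0) = 0 := by
    simp only [hgdef, LinearMap.coe_mk, AddHom.coe_mk, hxdef, Function.iterate_zero, id_eq]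
    exact hzc y₁
  have hgs : ∀ n, g (x (n + 1)) = x n := by
    intro n
    simp only [hgdef, LinearMap.coe_mk, AddHom.coe_mk]
    rw [hrel n y₁, hf1, one_smul]
  -- linear independence of the ladder
  have indep : ∀ n (c : Fin n → K), (∑ i, c i • x (i : ℕ)) = 0 → ∀ i, c i = 0 := by
    intro n
    induction n with
    | zero => intro c _ i; exact i.elim0
    | succ n ih =>
      intro c hc
      have hgc : (∑ j : Fin n, c j.succ • x (j : ℕ)) = 0 := by
        have h := congrArg g hc
        rw [map_sum, map_zero, Fin.sum_univ_succ] at h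
        simp only [map_smul, Fin.val_zero, Fin.val_succ, hg0, hgs, smul_zero, zero_add] at h
        exact h
      have htail := ih (fun j => c j.succ) hgc
      have hc0 : c 0 = 0 := by
        rw [Fin.sum_univ_succ] at hc
        have hsum : (∑ j : Fin n, c j.succ • x ((j.succ : ℕ))) = 0 := by
          refine Finset.sum_eq_zero fun j _ => ?_
          have hj : c j.succ = 0 := htail j
          rw [hj, zero_smul]
        rw [hsum, add_zero] at hc
        simp only [Fin.val_zero] at hc
        have hz0 : x 0 = z := by simp [hxdef]
        rw [hz0] at hc
        exact (smul_eq_zero.mp hc).resolve_right hz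
      intro i
      exact Fin.cases hc0 (fun j => htail j) i
  have li : LinearIndependent K (fun i : Fin (Module.finrank K L + 1) => x (i : ℕ)) :=
    Fintype.linearIndependent_iff.mpr (indep _)
  have hcard := li.fintype_card_le_finrank
  simp only [Fintype.card_fin] at hcard
  omega
end

section
/- Let R be the 5-dimensional complex Lie algebra with basis e₁,e₂,e₃,x₁,x₂ and nonzero brackets [e₂,e₃] = e₁, [e₂,x₁] = e₂, [e₁,x₁] = e₁, [e₃,x₂] = e₃, [e₁,x₂] = e₁. Then every derivation of R is inner, i.e., H¹(R, R) = 0. -/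
/-- Every derivation of the 5-dimensional complex solvable Lie algebra with basis
`e₁,e₂,e₃,x₁,x₂` and nonzero brackets `⁅e₂,e₃⁆ = e₁`, `⁅e₂,x₁⁆ = e₂`, `⁅e₁,x₁⁆ = e₁`,
`⁅e₃,x₂⁆ = e₃`, `⁅e₁,x₂⁆ = e₁` is inner, i.e. `H¹(R,R) = 0`. -/
theorem derivations_inner_of_five_dim_extension
    (R : Type*) [LieRing R] [LieAlgebra ℂ R] [FiniteDimensional ℂ R]
    (b : Module.Basis (Fin 5) ℂ R)
    (h12 : ⁅b 1, b 2⁆ = b 0) (h13 : ⁅b 1, b 3⁆ = b 1) (h03 : ⁅b 0, b 3⁆ = b 0)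
    (h24 : ⁅b 2, b 4⁆ = b 2) (h04 : ⁅b 0, b 4⁆ = b 0)
    (h01 : ⁅b 0, b 1⁆ = 0) (h02 : ⁅b 0, b 2⁆ = 0) (h14 : ⁅b 1, b 4⁆ = 0)
    (h23 : ⁅b 2, b 3⁆ = 0) (h34 : ⁅b 3, b 4⁆ = 0) :
    ∀ D : LieDerivation ℂ R R, ∃ x : R, D = LieDerivation.ad ℂ R x := by
  intro D
  have h21 : ⁅b 2, b 1⁆ = -b 0 := by rw [← lie_skew, h12]
  have h31 : ⁅b 3, b 1⁆ = -b 1 := by rw [← lie_skew, h13]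
  have h30 : ⁅b 3, b 0⁆ = -b 0 := by rw [← lie_skew, h03]
  have h42 : ⁅b 4, b 2⁆ = -b 2 := by rw [← lie_skew, h24]
  have h40 : ⁅b 4, b 0⁆ = -b 0 := by rw [← lie_skew, h04]
  have h10 : ⁅b 1, b 0⁆ = 0 := by rw [← lie_skew, h01, neg_zero]
  have h20 : ⁅b 2, b 0⁆ = 0 := by rw [← lie_skew, h02, neg_zero]
  have h41 : ⁅b 4, b 1⁆ = 0 := by rw [← lie_skew, h14, neg_zero]
  have h32 : ⁅b 3, b 2⁆ = 0 := by rw [← lie_skew, h23, neg_zero]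
  have h43 : ⁅b 4, b 3⁆ = 0 := by rw [← lie_skew, h34, neg_zero]
  have hD : ∀ j : Fin 5, D (b j) = b.repr (D (b j)) 0 • b 0 + b.repr (D (b j)) 1 • b 1
      + b.repr (D (b j)) 2 • b 2 + b.repr (D (b j)) 3 • b 3 + b.repr (D (b j)) 4 • b 4 := by
    intro j
    have := b.sum_repr (D (b j))
    rw [Fin.sum_univ_five] at this
    exact this.symm
  have e01 : D ⁅b 0, b 1⁆ = ⁅b 0, D (b 1)⁆ + ⁅D (b 0), b 1⁆ := D.apply_lie_eq_add _ _
  rw [h01, map_zero, hD 0, hD 1] at e01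
  simp only [add_lie, lie_add, smul_lie, lie_smul, lie_self, h12, h13, h03, h24, h04, h01, h02, h14, h23, h34, h21, h31, h30, h42, h40, h10, h20, h41, h32, h43, smul_zero, smul_neg, add_zero, zero_add] at e01
  have e02 : D ⁅b 0, b 2⁆ = ⁅b 0, D (b 2)⁆ + ⁅D (b 0), b 2⁆ := D.apply_lie_eq_add _ _
  rw [h02, map_zero, hD 0, hD 2] at e02
  simp only [add_lie, lie_add, smul_lie, lie_smul, lie_self, h12, h13, h03, h24, h04, h01, h02, h14, h23, h34, h21, h31, h30, h42, h40, h10, h20, h41, h32, h43, smul_zero, smul_neg, add_zero, zero_add] at e02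
  have e03 : D ⁅b 0, b 3⁆ = ⁅b 0, D (b 3)⁆ + ⁅D (b 0), b 3⁆ := D.apply_lie_eq_add _ _
  rw [h03, hD 0, hD 3] at e03
  simp only [add_lie, lie_add, smul_lie, lie_smul, lie_self, h12, h13, h03, h24, h04, h01, h02, h14, h23, h34, h21, h31, h30, h42, h40, h10, h20, h41, h32, h43, smul_zero, smul_neg, add_zero, zero_add] at e03
  have e04 : D ⁅b 0, b 4⁆ = ⁅b 0, D (b 4)⁆ + ⁅D (b 0), b 4⁆ := D.apply_lie_eq_add _ _
  rw [h04, hD 0, hD 4] at e04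
  simp only [add_lie, lie_add, smul_lie, lie_smul, lie_self, h12, h13, h03, h24, h04, h01, h02, h14, h23, h34, h21, h31, h30, h42, h40, h10, h20, h41, h32, h43, smul_zero, smul_neg, add_zero, zero_add] at e04
  have e12 : D ⁅b 1, b 2⁆ = ⁅b 1, D (b 2)⁆ + ⁅D (b 1), b 2⁆ := D.apply_lie_eq_add _ _
  rw [h12, hD 0, hD 1, hD 2] at e12
  simp only [add_lie, lie_add, smul_lie, lie_smul, lie_self, h12, h13, h03, h24, h04, h01, h02, h14, h23, h34, h21, h31, h30, h42, h40, h10, h20, h41, h32, h43, smul_zero, smul_neg, add_zero, zero_add] at e12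
  have e13 : D ⁅b 1, b 3⁆ = ⁅b 1, D (b 3)⁆ + ⁅D (b 1), b 3⁆ := D.apply_lie_eq_add _ _
  rw [h13, hD 1, hD 3] at e13
  simp only [add_lie, lie_add, smul_lie, lie_smul, lie_self, h12, h13, h03, h24, h04, h01, h02, h14, h23, h34, h21, h31, h30, h42, h40, h10, h20, h41, h32, h43, smul_zero, smul_neg, add_zero, zero_add] at e13
  have e14 : D ⁅b 1, b 4⁆ = ⁅b 1, D (b 4)⁆ + ⁅D (b 1), b 4⁆ := D.apply_lie_eq_add _ _
  rw [h14, map_zero, hD 1, hD 4] at e14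
  simp only [add_lie, lie_add, smul_lie, lie_smul, lie_self, h12, h13, h03, h24, h04, h01, h02, h14, h23, h34, h21, h31, h30, h42, h40, h10, h20, h41, h32, h43, smul_zero, smul_neg, add_zero, zero_add] at e14
  have e23 : D ⁅b 2, b 3⁆ = ⁅b 2, D (b 3)⁆ + ⁅D (b 2), b 3⁆ := D.apply_lie_eq_add _ _
  rw [h23, map_zero, hD 2, hD 3] at e23
  simp only [add_lie, lie_add, smul_lie, lie_smul, lie_self, h12, h13, h03, h24, h04, h01, h02, h14, h23, h34, h21, h31, h30, h42, h40, h10, h20, h41, h32, h43, smul_zero, smul_neg, add_zero, zero_add] at e23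
  have e24 : D ⁅b 2, b 4⁆ = ⁅b 2, D (b 4)⁆ + ⁅D (b 2), b 4⁆ := D.apply_lie_eq_add _ _
  rw [h24, hD 2, hD 4] at e24
  simp only [add_lie, lie_add, smul_lie, lie_smul, lie_self, h12, h13, h03, h24, h04, h01, h02, h14, h23, h34, h21, h31, h30, h42, h40, h10, h20, h41, h32, h43, smul_zero, smul_neg, add_zero, zero_add] at e24
  have e34 : D ⁅b 3, b 4⁆ = ⁅b 3, D (b 4)⁆ + ⁅D (b 3), b 4⁆ := D.apply_lie_eq_add _ _
  rw [h34, map_zero, hD 3, hD 4] at e34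
  simp only [add_lie, lie_add, smul_lie, lie_smul, lie_self, h12, h13, h03, h24, h04, h01, h02, h14, h23, h34, h21, h31, h30, h42, h40, h10, h20, h41, h32, h43, smul_zero, smul_neg, add_zero, zero_add] at e34
  have f30 : b.repr (D (b 0)) 3 = 0 := by
    have h := congrArg (fun y => b.repr y 1) e01
    simp [Finsupp.single_apply] at h
    first | exact h | exact h.symm | linear_combination h | linear_combination -h
  have f40 : b.repr (D (b 0)) 4 = 0 := by
    have h := congrArg (fun y => b.repr y 2) e02
    simp [Finsupp.single_apply] at h
    first | exact h | exact h.symm | linear_combination h | linear_combination -h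
  have f20 : b.repr (D (b 0)) 2 = 0 := by
    have h := congrArg (fun y => b.repr y 2) e03
    simp [Finsupp.single_apply] at h
    first | exact h | exact h.symm | linear_combination h | linear_combination -h
  have f10 : b.repr (D (b 0)) 1 = 0 := by
    have h := congrArg (fun y => b.repr y 1) e04
    simp [Finsupp.single_apply] at h
    first | exact h | exact h.symm | linear_combination h | linear_combination -h
  have f33 : b.repr (D (b 3)) 3 = 0 := by
    have h := congrArg (fun y => b.repr y 1) e13
    simp [Finsupp.single_apply] at h
    first | exact h | exact h.symm | linear_combination h | linear_combination -h
  have f43 : b.repr (D (b 3)) 4 = 0 := by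
    have h := congrArg (fun y => b.repr y 2) e23
    simp [Finsupp.single_apply] at h
    first | exact h | exact h.symm | linear_combination h | linear_combination -h
  have f44 : b.repr (D (b 4)) 4 = 0 := by
    have h := congrArg (fun y => b.repr y 2) e24
    simp [Finsupp.single_apply] at h
    first | exact h | exact h.symm | linear_combination h | linear_combination -h
  have f34 : b.repr (D (b 4)) 3 = 0 := by
    have h := congrArg (fun y => b.repr y 1) e14
    simp [Finsupp.single_apply] at h
    first | exact h | exact h.symm | linear_combination h | linear_combination -h
  have f23 : b.repr (D (b 3)) 2 = 0 := by
    have h := congrArg (fun y => b.repr y 0) e13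
    simp [Finsupp.single_apply] at h
    first | exact h | exact h.symm | linear_combination h | linear_combination -h
  have f21 : b.repr (D (b 1)) 2 = 0 := by
    have h := congrArg (fun y => b.repr y 2) e13
    simp [Finsupp.single_apply] at h
    first | exact h | exact h.symm | linear_combination h | linear_combination -h
  have f31 : b.repr (D (b 1)) 3 = 0 := by
    have h := congrArg (fun y => b.repr y 3) e13
    simp [Finsupp.single_apply] at h
    first | exact h | exact h.symm | linear_combination h | linear_combination -h
  have f41 : b.repr (D (b 1)) 4 = 0 := by
    have h := congrArg (fun y => b.repr y 4) e13
    simp [Finsupp.single_apply] at h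
    first | exact h | exact h.symm | linear_combination h | linear_combination -h
  have f32 : b.repr (D (b 2)) 3 = 0 := by
    have h := congrArg (fun y => b.repr y 3) e24
    simp [Finsupp.single_apply] at h
    first | exact h | exact h.symm | linear_combination h | linear_combination -h
  have f42 : b.repr (D (b 2)) 4 = 0 := by
    have h := congrArg (fun y => b.repr y 4) e24
    simp [Finsupp.single_apply] at h
    first | exact h | exact h.symm | linear_combination h | linear_combination -h
  have f12 : b.repr (D (b 2)) 1 = 0 := by
    have h := congrArg (fun y => b.repr y 1) e24
    simp [Finsupp.single_apply] at h
    first | exact h | exact h.symm | linear_combination h | linear_combination -h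
  have f14 : b.repr (D (b 4)) 1 = 0 := by
    have h := congrArg (fun y => b.repr y 0) e24
    simp [Finsupp.single_apply] at h
    first | exact h | exact h.symm | linear_combination h | linear_combination -h
  have f00 : b.repr (D (b 0)) 0 = b.repr (D (b 1)) 1 + b.repr (D (b 2)) 2 := by
    have h := congrArg (fun y => b.repr y 0) e12
    simp [Finsupp.single_apply] at h
    first | exact h | exact h.symm | linear_combination h | linear_combination -h
  have f01 : b.repr (D (b 1)) 0 = -b.repr (D (b 4)) 2 := by
    have h := congrArg (fun y => b.repr y 0) e14
    simp [Finsupp.single_apply] at h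
    first | exact h | exact h.symm | linear_combination h | linear_combination -h
  have f02 : b.repr (D (b 2)) 0 = b.repr (D (b 3)) 1 := by
    have h := congrArg (fun y => b.repr y 0) e23
    simp [Finsupp.single_apply] at h
    first | exact h | exact h.symm | linear_combination h | linear_combination -h
  have f03 : b.repr (D (b 3)) 0 = b.repr (D (b 4)) 0 := by
    have h := congrArg (fun y => b.repr y 0) e34
    simp [Finsupp.single_apply] at h
    first | exact h | exact h.symm | linear_combination h | linear_combination -h
  obtain ⟨x, hx⟩ : ∃ x : R, x = b.repr (D (b 4)) 0 • b 0 + b.repr (D (b 3)) 1 • b 1 + b.repr (D (b 4)) 2 • b 2 - b.repr (D (b 1)) 1 • b 3 - b.repr (D (b 2)) 2 • b 4 := ⟨_, rfl⟩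
  have key0 : D (b 0) = ⁅x, b 0⁆ := by
    conv_lhs => rw [hD 0]
    rw [hx]
    simp only [add_lie, lie_add, smul_lie, lie_smul, lie_self, h12, h13, h03, h24, h04, h01, h02, h14, h23, h34, h21, h31, h30, h42, h40, h10, h20, h41, h32, h43, smul_zero, smul_neg, add_zero, zero_add, sub_lie, neg_smul, neg_lie, neg_neg, sub_zero, zero_sub, f30, f40, f20, f10, f33, f43, f44, f34, f23, f21, f31, f41, f32, f42, f12, f14, f00, f01, f02, f03, zero_smul, add_zero, zero_add, neg_zero]
    try module
  have key1 : D (b 1) = ⁅x, b 1⁆ := by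
    conv_lhs => rw [hD 1]
    rw [hx]
    simp only [add_lie, lie_add, smul_lie, lie_smul, lie_self, h12, h13, h03, h24, h04, h01, h02, h14, h23, h34, h21, h31, h30, h42, h40, h10, h20, h41, h32, h43, smul_zero, smul_neg, add_zero, zero_add, sub_lie, neg_smul, neg_lie, neg_neg, sub_zero, zero_sub, f30, f40, f20, f10, f33, f43, f44, f34, f23, f21, f31, f41, f32, f42, f12, f14, f00, f01, f02, f03, zero_smul, add_zero, zero_add, neg_zero]
    try module
  have key2 : D (b 2) = ⁅x, b 2⁆ := by
    conv_lhs => rw [hD 2]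
    rw [hx]
    simp only [add_lie, lie_add, smul_lie, lie_smul, lie_self, h12, h13, h03, h24, h04, h01, h02, h14, h23, h34, h21, h31, h30, h42, h40, h10, h20, h41, h32, h43, smul_zero, smul_neg, add_zero, zero_add, sub_lie, neg_smul, neg_lie, neg_neg, sub_zero, zero_sub, f30, f40, f20, f10, f33, f43, f44, f34, f23, f21, f31, f41, f32, f42, f12, f14, f00, f01, f02, f03, zero_smul, add_zero, zero_add, neg_zero]
    try module
  have key3 : D (b 3) = ⁅x, b 3⁆ := by
    conv_lhs => rw [hD 3]
    rw [hx]
    simp only [add_lie, lie_add, smul_lie, lie_smul, lie_self, h12, h13, h03, h24, h04, h01, h02, h14, h23, h34, h21, h31, h30, h42, h40, h10, h20, h41, h32, h43, smul_zero, smul_neg, add_zero, zero_add, sub_lie, neg_smul, neg_lie, neg_neg, sub_zero, zero_sub, f30, f40, f20, f10, f33, f43, f44, f34, f23, f21, f31, f41, f32, f42, f12, f14, f00, f01, f02, f03, zero_smul, add_zero, zero_add, neg_zero]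
    try module
  have key4 : D (b 4) = ⁅x, b 4⁆ := by
    conv_lhs => rw [hD 4]
    rw [hx]
    simp only [add_lie, lie_add, smul_lie, lie_smul, lie_self, h12, h13, h03, h24, h04, h01, h02, h14, h23, h34, h21, h31, h30, h42, h40, h10, h20, h41, h32, h43, smul_zero, smul_neg, add_zero, zero_add, sub_lie, neg_smul, neg_lie, neg_neg, sub_zero, zero_sub, f30, f40, f20, f10, f33, f43, f44, f34, f23, f21, f31, f41, f32, f42, f12, f14, f00, f01, f02, f03, zero_smul, add_zero, zero_add, neg_zero]
    try module
  have had : ∀ y : R, (LieDerivation.ad ℂ R x) y = ⁅x, y⁆ := fun y => by rw [LieDerivation.ad_apply_apply]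
  refine ⟨x, ?_⟩
  have hlin : (D : R →ₗ[ℂ] R) = ((LieDerivation.ad ℂ R x) : R →ₗ[ℂ] R) := by
    apply b.ext
    intro i
    rw [LieDerivation.coeFn_coe, LieDerivation.coeFn_coe, had]
    fin_cases i
    exacts [key0, key1, key2, key3, key4]
  apply LieDerivation.ext
  intro a
  calc D a = (D : R →ₗ[ℂ] R) a := rfl
    _ = _ := by rw [hlin]; rfl
end

section
/- Let R be the complex solvable Lie algebra with basis e₁,…,eₙ, f₁, f₂ and nonzero brackets [eₖ, eₙ] = e_{k−1} for 2 ≤ k ≤ n−1, [f₁, eₙ] = eₙ, [f₁, eₖ] = (n−1−k)eₖ for 1 ≤ k ≤ n−1, [f₂, eₖ] = eₖ for 1 ≤ k ≤ n−1. Then R is a Lie algebra (Jacobi identity holds), R is solvable, and the subalgebra spanned by e₁,…,eₙ is a nilpotent ideal of R. -/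
/-- Bilinearity helper: to check a bracket lands in a submodule, it suffices to
check it on spanning sets. -/
private lemma lie_mem_of_span_span {R : Type*} [LieRing R] [LieAlgebra ℂ R]
    (T : Submodule ℂ R) {s t : Set R}
    (h : ∀ y ∈ s, ∀ z ∈ t, ⁅y, z⁆ ∈ T) :
    ∀ x ∈ Submodule.span ℂ s, ∀ y ∈ Submodule.span ℂ t, ⁅x, y⁆ ∈ T := by
  intro x hx
  induction hx using Submodule.span_induction with
  | mem u hu =>
    intro y hy
    induction hy using Submodule.span_induction with
    | mem v hv => exact h u hu v hv
    | zero => rw [lie_zero]; exact T.zero_mem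
    | add v w _ _ ihv ihw => rw [lie_add]; exact T.add_mem ihv ihw
    | smul c v _ ihv => rw [lie_smul]; exact T.smul_mem c ihv
  | zero => intro y hy; rw [zero_lie]; exact T.zero_mem
  | add u v _ _ ihu ihv => intro y hy; rw [add_lie]; exact T.add_mem (ihu y hy) (ihv y hy)
  | smul c u _ ihu => intro y hy; rw [smul_lie]; exact T.smul_mem c (ihu y hy)

/-- Build a Lie ideal from a submodule stable under all brackets. -/
private def mkLieIdeal {R : Type*} [LieRing R] [LieAlgebra ℂ R] (T : Submodule ℂ R)
    (h : ∀ (x : R), ∀ y ∈ T, ⁅x, y⁆ ∈ T) : LieIdeal ℂ R :=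
  { T with lie_mem := fun {x m} hm => h x m hm }

private lemma coe_mkLieIdeal {R : Type*} [LieRing R] [LieAlgebra ℂ R] (T : Submodule ℂ R)
    (h : ∀ (x : R), ∀ y ∈ T, ⁅x, y⁆ ∈ T) :
    ((mkLieIdeal T h : LieIdeal ℂ R) : Submodule ℂ R) = T := rfl

private lemma mem_mkLieIdeal {R : Type*} [LieRing R] [LieAlgebra ℂ R] (T : Submodule ℂ R)
    (h : ∀ (x : R), ∀ y ∈ T, ⁅x, y⁆ ∈ T) (x : R) :
    x ∈ (mkLieIdeal T h : LieIdeal ℂ R) ↔ x ∈ T := Iff.rfl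

/-- If the lower central series of an ideal, computed inside the ambient algebra,
vanishes, then the ideal is a nilpotent Lie algebra. -/
private lemma lieIdeal_isNilpotent_of_lcs_eq_bot {R₀ L : Type*} [CommRing R₀] [LieRing L]
    [LieAlgebra R₀ L] (I : LieIdeal R₀ L) (k : ℕ) (h : I.lcs L k = ⊥) :
    LieRing.IsNilpotent I := by
  have key : ∀ m : ℕ, ∀ x ∈ LieModule.lowerCentralSeries R₀ I I m, (x : L) ∈ I.lcs L m := by
    intro m
    induction m with
    | zero => intro x _; rw [LieIdeal.lcs_zero]; exact LieSubmodule.mem_top _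
    | succ m ih =>
      intro x hx
      rw [LieModule.lowerCentralSeries_succ, ← LieSubmodule.mem_toSubmodule,
        LieSubmodule.lieIdeal_oper_eq_linear_span'] at hx
      induction hx using Submodule.span_induction with
      | mem u hu =>
        obtain ⟨y, -, z, hz, rfl⟩ := hu
        have hcoe : ((⁅y, z⁆ : I) : L) = ⁅(y : L), (z : L)⁆ := rfl
        rw [LieIdeal.lcs_succ, hcoe]
        exact LieSubmodule.lie_mem_lie y.2 (ih z hz)
      | zero => simp
      | add u v _ _ ihu ihv => simpa using add_mem ihu ihv
      | smul c u _ ihu => simpa using Submodule.smul_mem _ c ihu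
  exact LieModule.IsNilpotent.mk (R := R₀) (L := I) (M := I) (k := k) (by
    rw [eq_bot_iff]
    intro x hx
    have hx' : (x : L) ∈ I.lcs L k := key k x hx
    rw [h, LieSubmodule.mem_bot] at hx'
    rw [LieSubmodule.mem_bot]
    exact Subtype.ext hx')
/-- The complex Lie algebra with basis `e₁,…,eₙ,f₁,f₂` (here `e` is indexed by `Fin n` and
`f` by `Fin 2`) and nonzero brackets `⁅eₖ,eₙ⁆ = e_{k−1}` (`2 ≤ k ≤ n−1`), `⁅f₁,eₙ⁆ = eₙ`,
`⁅f₁,eₖ⁆ = (n−1−k)eₖ` and `⁅f₂,eₖ⁆ = eₖ` (`1 ≤ k ≤ n−1`) satisfies the Jacobi identity,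
is solvable, and the span of `e₁,…,eₙ` is a nilpotent ideal. -/
theorem solvable_algebra_with_nilpotent_ideal
    (n : ℕ) (hn : 4 ≤ n)
    (R : Type*) [LieRing R] [LieAlgebra ℂ R] [FiniteDimensional ℂ R]
    (b : Module.Basis (Fin n ⊕ Fin 2) ℂ R)
    (h1 : ∀ k : Fin n, 1 ≤ (k : ℕ) → (k : ℕ) ≤ n - 2 →
      ⁅b (Sum.inl k), b (Sum.inl ⟨n - 1, by omega⟩)⁆ = b (Sum.inl ⟨(k : ℕ) - 1, by omega⟩))
    (h2 : ⁅b (Sum.inl ⟨0, by omega⟩), b (Sum.inl ⟨n - 1, by omega⟩)⁆ = 0)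
    (h3 : ∀ i j : Fin n, (i : ℕ) < (j : ℕ) → (j : ℕ) < n - 1 →
      ⁅b (Sum.inl i), b (Sum.inl j)⁆ = 0)
    (h4 : ⁅b (Sum.inr 0), b (Sum.inl ⟨n - 1, by omega⟩)⁆ = b (Sum.inl ⟨n - 1, by omega⟩))
    (h5 : ∀ k : Fin n, (k : ℕ) ≤ n - 2 →
      ⁅b (Sum.inr 0), b (Sum.inl k)⁆ = (((n : ℂ) - 2 - (k : ℕ))) • b (Sum.inl k))
    (h6 : ∀ k : Fin n, (k : ℕ) ≤ n - 2 → ⁅b (Sum.inr 1), b (Sum.inl k)⁆ = b (Sum.inl k))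
    (h7 : ⁅b (Sum.inr 1), b (Sum.inl ⟨n - 1, by omega⟩)⁆ = 0)
    (h8 : ⁅b (Sum.inr 0), b (Sum.inr 1)⁆ = 0) :
    (∀ u v w : R, ⁅u, ⁅v, w⁆⁆ = ⁅⁅u, v⁆, w⁆ + ⁅v, ⁅u, w⁆⁆) ∧
    LieAlgebra.IsSolvable R ∧
    ∃ I : LieIdeal ℂ R,
      (I : Submodule ℂ R) = Submodule.span ℂ (Set.range (b ∘ Sum.inl)) ∧
      LieRing.IsNilpotent I := by
  have hn1 : n - 1 < n := by omega
  have hn0 : 0 < n := by omega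
  -- the span of the `e`'s and its filtration
  set E : Submodule ℂ R := Submodule.span ℂ (Set.range (b ∘ Sum.inl)) with hE
  set S : ℕ → Submodule ℂ R := fun m =>
    Submodule.span ℂ {x | ∃ j : Fin n, (j : ℕ) < m ∧ b (Sum.inl j) = x} with hS
  have hSmono : ∀ {m₁ m₂ : ℕ}, m₁ ≤ m₂ → S m₁ ≤ S m₂ := fun {m₁ m₂} h =>
    Submodule.span_mono (fun x ⟨j, hj, hx⟩ => ⟨j, lt_of_lt_of_le hj h, hx⟩)
  have hSE : ∀ m, S m ≤ E := fun m =>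
    Submodule.span_mono (fun x ⟨j, _, hx⟩ => ⟨j, hx⟩)
  have hmemS : ∀ (m : ℕ) (j : Fin n), (j : ℕ) < m → b (Sum.inl j) ∈ S m :=
    fun m j hj => Submodule.subset_span ⟨j, hj, rfl⟩
  have hmemE : ∀ j : Fin n, b (Sum.inl j) ∈ E := fun j => Submodule.subset_span ⟨j, rfl⟩
  have hS0 : S 0 ≤ ⊥ :=
    Submodule.span_le.mpr (fun x ⟨j, hj, _⟩ => absurd hj (Nat.not_lt_zero _))
  -- brackets of basis vectors
  have hM : ∀ i k : Fin n,
      ⁅b (Sum.inl i), b (Sum.inl k)⁆ ∈ S (min (min (i : ℕ) (k : ℕ)) (n - 2)) := by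
    have haux : ∀ i k : Fin n, (i : ℕ) < (k : ℕ) →
        ⁅b (Sum.inl i), b (Sum.inl k)⁆ ∈ S (min (min (i : ℕ) (k : ℕ)) (n - 2)) := by
      intro i k hik
      rcases lt_or_ge (k : ℕ) (n - 1) with hk | hk
      · rw [h3 i k hik hk]; exact Submodule.zero_mem _
      · have hk' : k = ⟨n - 1, hn1⟩ :=
          Fin.ext (by have := k.isLt; simp only [Fin.val_mk]; omega)
        subst hk'
        rcases Nat.eq_zero_or_pos (i : ℕ) with hi0 | hi1
        · have hi' : i = ⟨0, hn0⟩ := Fin.ext (by simpa using hi0)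
          subst hi'
          rw [h2]; exact Submodule.zero_mem _
        · have hi2 : (i : ℕ) ≤ n - 2 := by
            have := hik; simp only [Fin.val_mk] at this; omega
          rw [h1 i hi1 hi2]
          refine hmemS _ ⟨(i : ℕ) - 1, by omega⟩ ?_
          simp only [Fin.val_mk, Nat.lt_min]
          omega
    intro i k
    rcases lt_trichotomy (i : ℕ) (k : ℕ) with h | h | h
    · exact haux i k h
    · rw [Fin.ext h, lie_self]; exact Submodule.zero_mem _
    · rw [← lie_skew]
      have := haux k i h
      rw [min_comm ((k : ℕ)) ((i : ℕ))] at this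
      exact Submodule.neg_mem _ this
  have htwo : ∀ a : Fin 2, a = 0 ∨ a = 1 := by decide
  have hMf : ∀ (a : Fin 2) (k : Fin n),
      ∃ c : ℂ, ⁅b (Sum.inr a), b (Sum.inl k)⁆ = c • b (Sum.inl k) := by
    intro a k
    rcases le_or_gt (k : ℕ) (n - 2) with hk | hk
    · rcases htwo a with rfl | rfl
      · exact ⟨_, h5 k hk⟩
      · exact ⟨1, by rw [h6 k hk, one_smul]⟩
    · have hk' : k = ⟨n - 1, hn1⟩ :=
        Fin.ext (by have := k.isLt; simp only [Fin.val_mk]; omega)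
      subst hk'
      rcases htwo a with rfl | rfl
      · exact ⟨1, by rw [h4, one_smul]⟩
      · exact ⟨0, by rw [h7, zero_smul]⟩
  have hff : ∀ c d : Fin 2, ⁅b (Sum.inr c), b (Sum.inr d)⁆ = 0 := by
    intro c d
    rcases htwo c with rfl | rfl <;> rcases htwo d with rfl | rfl
    · exact lie_self _
    · exact h8
    · rw [← lie_skew, h8, neg_zero]
    · exact lie_self _
  -- all brackets land in E
  have hAll : ∀ x y : R, ⁅x, y⁆ ∈ E := by
    intro x y
    have hx : x ∈ Submodule.span ℂ (Set.range b) := by rw [b.span_eq]; trivial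
    have hy : y ∈ Submodule.span ℂ (Set.range b) := by rw [b.span_eq]; trivial
    refine lie_mem_of_span_span E ?_ x hx y hy
    rintro _ ⟨u, rfl⟩ _ ⟨v, rfl⟩
    rcases u with i | a <;> rcases v with j | d
    · exact hSE _ (hM i j)
    · rw [← lie_skew]
      obtain ⟨c, hc⟩ := hMf d i
      rw [hc]
      exact Submodule.neg_mem _ (Submodule.smul_mem _ _ (hmemE i))
    · obtain ⟨c, hc⟩ := hMf a j
      rw [hc]
      exact Submodule.smul_mem _ _ (hmemE j)
    · rw [hff a d]; exact Submodule.zero_mem _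
  have hE_lie : ∀ (x : R), ∀ y ∈ E, ⁅x, y⁆ ∈ E := fun x y _ => hAll x y
  set I : LieIdeal ℂ R := mkLieIdeal E hE_lie with hI
  -- the filtration ideals
  have hN_lie : ∀ (m : ℕ) (x : R), ∀ y ∈ S (min m (n - 1)), ⁅x, y⁆ ∈ S (min m (n - 1)) := by
    intro m x y hy
    have hx : x ∈ Submodule.span ℂ (Set.range b) := by rw [b.span_eq]; trivial
    refine lie_mem_of_span_span (S (min m (n - 1))) ?_ x hx y hy
    rintro _ ⟨u, rfl⟩ _ ⟨k, hk, rfl⟩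
    rcases u with i | a
    · refine hSmono ?_ (hM i k)
      have h1' : min (min (i : ℕ) (k : ℕ)) (n - 2) ≤ (k : ℕ) :=
        le_trans (min_le_left _ _) (min_le_right _ _)
      omega
    · obtain ⟨c, hc⟩ := hMf a k
      rw [hc]
      exact Submodule.smul_mem _ _ (hmemS _ k hk)
  set N : ℕ → LieIdeal ℂ R := fun m => mkLieIdeal (S (min m (n - 1))) (hN_lie m) with hNdef
  -- E is closed under brackets from E into the lower filtration
  have hchain : ∀ m : ℕ, ⁅I, (N (m + 1) : LieSubmodule ℂ R R)⁆ ≤ N m := by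
    intro m
    rw [LieSubmodule.lie_le_iff]
    intro x hx y hy
    refine lie_mem_of_span_span (S (min m (n - 1))) ?_ x hx y hy
    rintro _ ⟨i, rfl⟩ _ ⟨k, hk, rfl⟩
    refine hSmono ?_ (hM i k)
    have h1' : min (min (i : ℕ) (k : ℕ)) (n - 2) ≤ (k : ℕ) :=
      le_trans (min_le_left _ _) (min_le_right _ _)
    have h2' : min (min (i : ℕ) (k : ℕ)) (n - 2) ≤ n - 2 := min_le_right _ _
    omega
  have hN0 : (N 0 : LieSubmodule ℂ R R) ≤ ⊥ := by
    intro x hx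
    have : x ∈ S (min 0 (n - 1)) := hx
    rw [Nat.min_comm, Nat.min_zero] at this
    have := hS0 this
    simpa using this
  -- the lower central series of I inside R
  have hbase : I.lcs R 2 ≤ (N (n - 2) : LieSubmodule ℂ R R) := by
    have hlcs1 : I.lcs R 1 ≤ (I : LieSubmodule ℂ R R) := by
      rw [show (1 : ℕ) = 0 + 1 from rfl, LieIdeal.lcs_succ, LieIdeal.lcs_zero,
        LieSubmodule.lie_le_iff]
      intro x hx m _
      rw [← lie_skew]
      exact neg_mem (hAll m x)
    rw [show (2 : ℕ) = 1 + 1 from rfl, LieIdeal.lcs_succ]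
    refine le_trans (LieSubmodule.mono_lie_right I hlcs1) ?_
    rw [LieSubmodule.lie_le_iff]
    intro x hx y hy
    have key : ∀ z ∈ E, ∀ w ∈ E, ⁅z, w⁆ ∈ S (min (n - 2) (n - 1)) := by
      refine lie_mem_of_span_span _ ?_
      rintro _ ⟨i, rfl⟩ _ ⟨k, rfl⟩
      refine hSmono ?_ (hM i k)
      have := min_le_right (min (i : ℕ) (k : ℕ)) (n - 2)
      omega
    exact key x hx y hy
  have hdesc : ∀ j : ℕ, I.lcs R (2 + j) ≤ (N (n - 2 - j) : LieSubmodule ℂ R R) := by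
    intro j
    induction j with
    | zero => simpa using hbase
    | succ j ih =>
      rw [show 2 + (j + 1) = (2 + j) + 1 from rfl, LieIdeal.lcs_succ]
      rcases lt_or_ge j (n - 2) with hj | hj
      · have hrw : n - 2 - j = (n - 2 - (j + 1)) + 1 := by omega
        rw [hrw] at ih
        exact le_trans (LieSubmodule.mono_lie_right I ih) (hchain _)
      · have h0 : n - 2 - j = 0 := by omega
        have h0' : n - 2 - (j + 1) = 0 := by omega
        rw [h0] at ih
        rw [h0']
        refine le_trans (LieSubmodule.mono_lie_right I (le_trans ih hN0)) ?_
        rw [LieSubmodule.lie_bot]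
        exact bot_le
  have hlcsn : I.lcs R n = ⊥ := by
    have h1' := hdesc (n - 2)
    rw [show 2 + (n - 2) = n from by omega, Nat.sub_self] at h1'
    exact le_bot_iff.mp (le_trans h1' hN0)
  -- nilpotency of I
  have hnil : LieRing.IsNilpotent I := lieIdeal_isNilpotent_of_lcs_eq_bot I n hlcsn
  -- solvability of R
  have hsolvI : LieAlgebra.IsSolvable I := by
    haveI := hnil
    infer_instance
  obtain ⟨k, hk⟩ := LieAlgebra.IsSolvable.solvable ℂ I
  have hk' : LieAlgebra.derivedSeriesOfIdeal ℂ R k I = ⊥ :=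
    (LieIdeal.derivedSeries_eq_bot_iff I k).mp hk
  have hD1 : LieAlgebra.derivedSeries ℂ R 1 ≤ I := by
    rw [LieAlgebra.derivedSeries_def, LieAlgebra.derivedSeriesOfIdeal_succ,
      LieAlgebra.derivedSeriesOfIdeal_zero, LieSubmodule.lie_le_iff]
    intro x _ y _
    exact hAll x y
  have hsolv : LieAlgebra.IsSolvable R := by
    refine LieAlgebra.IsSolvable.mk (R := ℂ) (k := k + 1) ?_
    rw [eq_bot_iff, ← hk']
    calc LieAlgebra.derivedSeries ℂ R (k + 1)
        = LieAlgebra.derivedSeriesOfIdeal ℂ R k (LieAlgebra.derivedSeries ℂ R 1) :=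
          LieAlgebra.derivedSeriesOfIdeal_add ⊤ k 1
      _ ≤ LieAlgebra.derivedSeriesOfIdeal ℂ R k I :=
          LieAlgebra.derivedSeriesOfIdeal_mono hD1 k
  exact ⟨fun u v w => leibniz_lie u v w, hsolv, I, rfl, hnil⟩
end
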